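/- Let f₁, f₂ : ℝ → ℝ be convex and differentiable on all of ℝ, and let f(x) = f₁(x) for x ≤ x₀ and f(x) = f₂(x) for x ≥ x₀, with f convex (so f₁(x₀) = f₂(x₀) and f₁'(x₀) ≤ f₂'(x₀)). Then for r > 0 the proximal mapping of f satisfies: P_r f(x) = P_r f₁(x) if x < x₀ + f₁'(x₀)/r; P_r f(x) = x₀ if x₀ + f₁'(x₀)/r ≤ x ≤ x₀ + f₂'(x₀)/r; and P_r f(x) = P_r f₂(x) if x > x₀ + f₂'(x₀)/r. -/

import Mathlib

open Set Filter Topology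

/-- `p` is a proximal point of `f` at `x` with parameter `r`. -/
def IsProx (f : ℝ → ℝ) (r x p : ℝ) : Prop :=
  ∀ y : ℝ, f p + r / 2 * (p - x) ^ 2 ≤ f y + r / 2 * (y - x) ^ 2

/-- Supporting line inequality for a convex differentiable function. -/
private lemma support_line {g : ℝ → ℝ} (hg : ConvexOn ℝ Set.univ g) {p g' : ℝ}
    (hd : HasDerivAt g g' p) (y : ℝ) : g p + g' * (y - p) ≤ g y := by
  rcases lt_trichotomy y p with h | rfl | h
  · have hs := hg.slope_le_of_hasDerivAt (Set.mem_univ y) (Set.mem_univ p) h hd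
    rw [slope_def_field] at hs
    have hpy : 0 < p - y := by linarith
    rw [div_le_iff₀ hpy] at hs
    nlinarith
  · simp
  · have hs := hg.le_slope_of_hasDerivAt (Set.mem_univ p) (Set.mem_univ y) h hd
    rw [slope_def_field] at hs
    have hpy : 0 < y - p := by linarith
    rw [le_div_iff₀ hpy] at hs
    nlinarith

private lemma quad_convex (r x : ℝ) (hr : 0 ≤ r) :
    ConvexOn ℝ Set.univ (fun y : ℝ => r / 2 * (y - x) ^ 2) := by
  refine ⟨convex_univ, fun a _ b _ ta tb hta htb hab => ?_⟩
  simp only [smul_eq_mul]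
  have htb' : tb = 1 - ta := by linarith
  subst htb'
  nlinarith [mul_nonneg (mul_nonneg hr (mul_nonneg hta (by linarith : (0:ℝ) ≤ 1 - ta)))
    (sq_nonneg (a - b))]

private lemma hasDerivAt_quad (g : ℝ → ℝ) (hg : Differentiable ℝ g) (r x p : ℝ) :
    HasDerivAt (fun y => g y + r / 2 * (y - x) ^ 2) (deriv g p + r * (p - x)) p := by
  have h0 : HasDerivAt (fun y : ℝ => (y - x) ^ 2) (2 * (p - x)) p := by
    simpa using ((hasDerivAt_id p).sub_const x).fun_pow 2
  have h1 := h0.const_mul (r / 2)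
  have h2 : HasDerivAt (fun y : ℝ => r / 2 * (y - x) ^ 2) (r * (p - x)) p := by
    exact h1.congr_deriv (by ring)
  exact (hg p).hasDerivAt.add h2

private lemma convexOn_comp_neg {g : ℝ → ℝ} (hg : ConvexOn ℝ Set.univ g) :
    ConvexOn ℝ Set.univ fun y => g (-y) := by
  refine ⟨convex_univ, fun a _ b _ ta tb hta htb hab => ?_⟩
  show g (-(ta • a + tb • b)) ≤ ta • g (-a) + tb • g (-b)
  have e : -(ta • a + tb • b) = ta • (-a) + tb • (-b) := by
    simp only [smul_eq_mul]; ring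
  rw [e]
  exact hg.2 (Set.mem_univ _) (Set.mem_univ _) hta htb hab

private lemma isProx_neg_iff {g : ℝ → ℝ} {r x p : ℝ} :
    IsProx (fun y => g (-y)) r (-x) (-p) ↔ IsProx g r x p := by
  constructor
  · intro h y
    have h' := h (-y)
    simp only [neg_neg] at h'
    have e1 : (-p - -x : ℝ) ^ 2 = (p - x) ^ 2 := by ring
    have e2 : (-y - -x : ℝ) ^ 2 = (y - x) ^ 2 := by ring
    rw [e1, e2] at h'
    exact h'
  · intro h y
    show g (- -p) + r / 2 * (-p - -x) ^ 2 ≤ g (-y) + r / 2 * (y - -x) ^ 2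
    rw [neg_neg]
    have e1 : (-p - -x : ℝ) ^ 2 = (p - x) ^ 2 := by ring
    have e2 : (y - -x : ℝ) ^ 2 = (-y - x) ^ 2 := by ring
    rw [e1, e2]
    exact h (-y)

private lemma left_lemma {f f₁ : ℝ → ℝ} {x₀ : ℝ}
    (h₁c : ConvexOn ℝ Set.univ f₁) (h₁d : Differentiable ℝ f₁)
    (hle : ∀ x ≤ x₀, f x = f₁ x)
    (hconv : ConvexOn ℝ Set.univ f) {r : ℝ} (hr : 0 < r)
    {x : ℝ} (hx : x < x₀ + deriv f₁ x₀ / r) (p : ℝ) :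
    IsProx f r x p ↔ IsProx f₁ r x p := by
  have hx' : 0 < deriv f₁ x₀ + r * (x₀ - x) := by
    have h0 : (x - x₀) * r < deriv f₁ x₀ := (lt_div_iff₀ hr).mp (by linarith)
    nlinarith
  have hFc : ConvexOn ℝ Set.univ (fun y => f y + r / 2 * (y - x) ^ 2) :=
    hconv.add (quad_convex r x hr.le)
  have hF₁c : ConvexOn ℝ Set.univ (fun y => f₁ y + r / 2 * (y - x) ^ 2) :=
    h₁c.add (quad_convex r x hr.le)
  constructor
  · intro h
    -- first show p < x₀
    have hpx : p < x₀ := by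
      by_contra hp
      push_neg at hp
      have star : ∀ y < x₀, f x₀ + r / 2 * (x₀ - x) ^ 2 ≤ f y + r / 2 * (y - x) ^ 2 := by
        intro y hy
        rcases eq_or_lt_of_le hp with rfl | hp'
        · exact h y
        · have hs := hFc.slope_mono_adjacent (Set.mem_univ y) (Set.mem_univ p) hy hp'
          have h1 := h x₀
          have h2 := h y
          rw [div_le_div_iff₀ (by linarith : (0:ℝ) < x₀ - y) (by linarith : (0:ℝ) < p - x₀)] at hs
          nlinarith [hs, h1, h2]
      have hder := hasDerivAt_quad f₁ h₁d r x x₀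
      have htend : Tendsto (slope (fun y => f₁ y + r / 2 * (y - x) ^ 2) x₀) (𝓝[<] x₀)
          (𝓝 (deriv f₁ x₀ + r * (x₀ - x))) :=
        (hasDerivAt_iff_tendsto_slope.mp hder).mono_left
          (nhdsWithin_mono _ fun y hy => ne_of_lt hy)
      have hnonpos : deriv f₁ x₀ + r * (x₀ - x) ≤ 0 := by
        refine le_of_tendsto htend ?_
        filter_upwards [self_mem_nhdsWithin] with y (hy : y < x₀)
        rw [slope_def_field]
        apply div_nonpos_of_nonneg_of_nonpos
        · have hst := star y hy
          rw [hle y hy.le, hle x₀ le_rfl] at hst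
          show (0:ℝ) ≤ (f₁ y + r / 2 * (y - x) ^ 2) - (f₁ x₀ + r / 2 * (x₀ - x) ^ 2)
          linarith
        · linarith
      linarith
    -- p < x₀ : deduce first-order condition and conclude
    have hlm : IsLocalMin (fun y => f₁ y + r / 2 * (y - x) ^ 2) p := by
      have hev : ∀ᶠ y in 𝓝 p, f₁ p + r / 2 * (p - x) ^ 2 ≤ f₁ y + r / 2 * (y - x) ^ 2 := by
        filter_upwards [eventually_lt_nhds hpx] with y hy
        have h' := h y
        rw [hle y hy.le, hle p hpx.le] at h'
        exact h'
      exact hev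
    have hd0 : deriv f₁ p + r * (p - x) = 0 :=
      hlm.hasDerivAt_eq_zero (hasDerivAt_quad f₁ h₁d r x p)
    intro y
    have hs := support_line hF₁c (hasDerivAt_quad f₁ h₁d r x p) y
    rw [hd0] at hs
    linarith
  · intro h
    have hlm : IsLocalMin (fun y => f₁ y + r / 2 * (y - x) ^ 2) p :=
      Filter.Eventually.of_forall h
    have hd0 : deriv f₁ p + r * (p - x) = 0 :=
      hlm.hasDerivAt_eq_zero (hasDerivAt_quad f₁ h₁d r x p)
    have hpx : p < x₀ := by
      by_contra hp
      push_neg at hp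
      rcases eq_or_lt_of_le hp with rfl | hp'
      · linarith
      · have s1 := support_line h₁c (h₁d x₀).hasDerivAt p
        have s2 := support_line h₁c (h₁d p).hasDerivAt x₀
        nlinarith [s1, s2, hd0, hx', sq_nonneg (p - x₀),
          mul_pos hr (show (0:ℝ) < p - x₀ by linarith)]
    intro y
    rcases le_or_gt y x₀ with hy | hy
    · rw [hle y hy, hle p hpx.le]
      exact h y
    · have h0 : f p + r / 2 * (p - x) ^ 2 ≤ f x₀ + r / 2 * (x₀ - x) ^ 2 := by
        rw [hle x₀ le_rfl, hle p hpx.le]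
        exact h x₀
      have hs := hFc.slope_mono_adjacent (Set.mem_univ p) (Set.mem_univ y) hpx hy
      rw [div_le_div_iff₀ (by linarith : (0:ℝ) < x₀ - p) (by linarith : (0:ℝ) < y - x₀)] at hs
      have hA : 0 ≤ (f x₀ + r / 2 * (x₀ - x) ^ 2) - (f p + r / 2 * (p - x) ^ 2) := by linarith
      nlinarith [hs, hA, mul_nonneg hA (show (0:ℝ) ≤ y - x₀ by linarith),
        show (0:ℝ) < x₀ - p by linarith, show (0:ℝ) < y - x₀ by linarith]

/-- Proximal mapping of a convex function glued from two convex differentiable pieces. -/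
theorem prox_of_two_piece {f f₁ f₂ : ℝ → ℝ} {x₀ : ℝ}
    (h₁c : ConvexOn ℝ Set.univ f₁) (h₂c : ConvexOn ℝ Set.univ f₂)
    (h₁d : Differentiable ℝ f₁) (h₂d : Differentiable ℝ f₂)
    (hle : ∀ x ≤ x₀, f x = f₁ x) (hge : ∀ x, x₀ ≤ x → f x = f₂ x)
    (hconv : ConvexOn ℝ Set.univ f) (r : ℝ) (hr : 0 < r) :
    (∀ x, x < x₀ + deriv f₁ x₀ / r → ∀ p, (IsProx f r x p ↔ IsProx f₁ r x p)) ∧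
    (∀ x, x₀ + deriv f₁ x₀ / r ≤ x → x ≤ x₀ + deriv f₂ x₀ / r →
      (IsProx f r x x₀ ∧ ∀ p, IsProx f r x p → p = x₀)) ∧
    (∀ x, x₀ + deriv f₂ x₀ / r < x → ∀ p, (IsProx f r x p ↔ IsProx f₂ r x p)) := by
  refine ⟨fun x hx p => left_lemma h₁c h₁d hle hconv hr hx p, ?_, ?_⟩
  · -- middle case
    intro x hx1 hx2
    have hd1 : deriv f₁ x₀ ≤ (x - x₀) * r := (div_le_iff₀ hr).mp (by linarith)
    have hd2 : (x - x₀) * r ≤ deriv f₂ x₀ := (le_div_iff₀ hr).mp (by linarith)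
    have hprox : IsProx f r x x₀ := by
      intro y
      rcases le_total y x₀ with hy | hy
      · rw [hle y hy, hle x₀ le_rfl]
        have s := support_line h₁c (h₁d x₀).hasDerivAt y
        nlinarith [s, mul_nonneg (sub_nonneg.mpr hy) (sub_nonneg.mpr hd1),
          mul_nonneg hr.le (sq_nonneg (y - x₀))]
      · rw [hge y hy, hge x₀ le_rfl]
        have s := support_line h₂c (h₂d x₀).hasDerivAt y
        nlinarith [s, mul_nonneg (sub_nonneg.mpr hy) (sub_nonneg.mpr hd2),
          mul_nonneg hr.le (sq_nonneg (y - x₀))]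
    refine ⟨hprox, fun p hp => ?_⟩
    have h1 := hp x₀
    have h2 := hprox p
    have hm := hconv.2 (Set.mem_univ p) (Set.mem_univ x₀)
      (by norm_num : (0:ℝ) ≤ 1/2) (by norm_num : (0:ℝ) ≤ 1/2) (by norm_num)
    simp only [smul_eq_mul] at hm
    have harg : (1/2 : ℝ) * p + (1/2 : ℝ) * x₀ = (p + x₀) / 2 := by ring
    rw [harg] at hm
    have h3 := hp ((p + x₀) / 2)
    have hsq : (p - x₀) ^ 2 ≤ 0 := by nlinarith [h1, h2, h3, hm, hr]
    have h0 : (p - x₀) ^ 2 = 0 := le_antisymm hsq (sq_nonneg _)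
    have := (pow_eq_zero_iff two_ne_zero).mp h0
    linarith
  · -- right case, by reflection
    intro x hx p
    have hg₂c : ConvexOn ℝ Set.univ (fun y => f₂ (-y)) := convexOn_comp_neg h₂c
    have hg₂d : Differentiable ℝ (fun y : ℝ => f₂ (-y)) := h₂d.comp differentiable_neg
    have hgle : ∀ z ≤ -x₀, f (-z) = f₂ (-z) := fun z hz => hge (-z) (by linarith)
    have hgconv : ConvexOn ℝ Set.univ (fun y => f (-y)) := convexOn_comp_neg hconv
    have hder : deriv (fun y : ℝ => f₂ (-y)) (-x₀) = -deriv f₂ x₀ := by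
      have h1 : HasDerivAt f₂ (deriv f₂ x₀) (-(-x₀)) := by
        rw [neg_neg]; exact (h₂d x₀).hasDerivAt
      have h2 := h1.comp (-x₀) (hasDerivAt_neg (-x₀))
      have h3 : HasDerivAt (fun y : ℝ => f₂ (-y)) (-deriv f₂ x₀) (-x₀) := by
        simpa [Function.comp_def, mul_neg_one] using h2
      exact h3.deriv
    have hx' : -x < -x₀ + deriv (fun y : ℝ => f₂ (-y)) (-x₀) / r := by
      rw [hder, neg_div]
      have : x₀ + deriv f₂ x₀ / r < x := hx
      linarith
    have key := left_lemma hg₂c hg₂d hgle hgconv hr hx' (-p)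
    rw [isProx_neg_iff, isProx_neg_iff] at key
    exact key
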